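/- Let G be a finite p-group and let ρ₁, …, ρ_k be irreducible complex representations of G with central characters χ₁, …, χ_k. If the restrictions of the χ_i to Ω₁(Z(G)) := {g ∈ Z(G) : g^p = 1} span the dual 𝔽_p-vector space Hom(Ω₁(Z(G)), ℂ*), then the direct sum ρ₁ ⊕ ⋯ ⊕ ρ_k is a faithful representation of G. -/

import Mathlib

/-- The subgroup `Ω₁(A) = {g ∈ A : g^p = 1}` of a commutative group `A`. -/
def Omega1 (p : ℕ) (A : Type*) [CommGroup A] : Subgroup A where
  carrier := {g | g ^ p = 1}
  one_mem' := by simp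
  mul_mem' := by
    intro a b ha hb
    simp only [Set.mem_setOf_eq] at *
    rw [mul_pow, ha, hb, one_mul]
  inv_mem' := by
    intro a ha
    simp only [Set.mem_setOf_eq] at *
    rw [inv_pow, ha, inv_one]

open scoped IsMulCommutative

/-- Let `G` be a finite `p`-group and `ρ₁,…,ρ_k` irreducible complex
representations of `G` with central characters `χ₁,…,χ_k`.  If the restrictions of the
`χᵢ` to `Ω₁(Z(G))` generate (equivalently, span over `𝔽_p`) the character group
`Hom(Ω₁(Z(G)), ℂ*)`, then `ρ₁ ⊕ ⋯ ⊕ ρ_k` is faithful, i.e. the `ρᵢ` jointly separate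
elements of `G`. -/
theorem stmt_13 (p : ℕ) [Fact p.Prime] (G : Type*) [Group G] [Finite G]
    (hG : IsPGroup p G)
    (k : ℕ) (V : Fin k → Type*)
    [∀ i, AddCommGroup (V i)] [∀ i, Module ℂ (V i)] [∀ i, FiniteDimensional ℂ (V i)]
    (ρ : ∀ i, Representation ℂ G (V i))
    (hirr : ∀ i, Nontrivial (V i) ∧
      ∀ W : Submodule ℂ (V i), (∀ g v, v ∈ W → ρ i g v ∈ W) → W = ⊥ ∨ W = ⊤)
    (χ : ∀ _ : Fin k, Subgroup.center G →* ℂˣ)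
    (hcentral : ∀ i (g : Subgroup.center G),
      ρ i (g : G) = (χ i g : ℂ) • (LinearMap.id : V i →ₗ[ℂ] V i))
    (hspan : Subgroup.closure
        (Set.range fun i : Fin k =>
          (χ i).comp (Omega1 p (Subgroup.center G)).subtype) = ⊤) :
    Function.Injective (fun g : G => fun i : Fin k => ρ i g) := by
  classical
  have hp : p.Prime := Fact.out
  -- It suffices to show the joint kernel is trivial.
  have hker : ∀ g : G, (∀ i, ρ i g = 1) → g = 1 := by
    intro g₀ hg₀
    by_contra hg₀ne
    -- The joint kernel as a subgroup
    let N : Subgroup G :=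
      { carrier := {g | ∀ i, ρ i g = 1}
        one_mem' := fun i => map_one (ρ i)
        mul_mem' := by
          intro a b ha hb i
          rw [map_mul, ha i, hb i, one_mul]
        inv_mem' := by
          intro a ha i
          have h1 : ρ i a⁻¹ * ρ i a = 1 := by rw [← map_mul, inv_mul_cancel, map_one]
          rw [ha i, mul_one] at h1
          exact h1 }
    have hmemN : ∀ g : G, g ∈ N ↔ ∀ i, ρ i g = 1 := fun g => Iff.rfl
    haveI hNnormal : N.Normal := by
      constructor
      intro n hn g i
      rw [map_mul, map_mul, hn i, mul_one, ← map_mul, mul_inv_cancel, map_one]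
    have hg₀N : g₀ ∈ N := hg₀
    haveI : Nontrivial N := ⟨⟨⟨g₀, hg₀N⟩, 1, by simp [hg₀ne]⟩⟩
    have hNp : IsPGroup p N := hG.to_subgroup N
    have hdvd : p ∣ Nat.card N := by
      obtain ⟨n, hn0, hn⟩ := hNp.nontrivial_iff_card.mp inferInstance
      exact hn.symm ▸ dvd_pow_self _ (ne_of_gt hn0)
    -- G acts on N by conjugation
    letI : MulAction G N := MulAction.compHom N (MulAut.conjNormal : G →* MulAut N)
    have hsmul : ∀ (g : G) (n : N), ((g • n : N) : G) = g * n * g⁻¹ := fun g n => rfl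
    have h1fix : (1 : N) ∈ MulAction.fixedPoints G N := by
      intro g
      ext
      rw [hsmul]
      simp
    obtain ⟨b, hbfix, hb1⟩ := hG.exists_fixed_point_of_prime_dvd_card_of_fixed_point N hdvd h1fix
    -- b is a nontrivial central element of N
    have hbcenter : (b : G) ∈ Subgroup.center G := by
      rw [Subgroup.mem_center_iff]
      intro g
      have := congrArg (Subtype.val) (hbfix g)
      rw [hsmul] at this
      calc g * b = (g * b * g⁻¹) * g := by group
        _ = b * g := by rw [this]
    have hbne : (b : G) ≠ 1 := by
      intro h
      exact hb1 (Subtype.ext (by simp [h]))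
    -- extract an element of order p
    obtain ⟨m₀, hm₀⟩ := hG (b : G)
    have hex : ∃ n : ℕ, (b : G) ^ p ^ n = 1 := ⟨m₀, hm₀⟩
    let m := Nat.find hex
    have hm : (b : G) ^ p ^ m = 1 := Nat.find_spec hex
    have hmpos : 0 < m := by
      rcases Nat.eq_zero_or_pos m with h | h
      · exfalso
        apply hbne
        have := hm
        rw [h, pow_zero, pow_one] at this
        exact this
      · exact h
    set z : G := (b : G) ^ p ^ (m - 1) with hzdef
    have hzne : z ≠ 1 := Nat.find_min hex (Nat.sub_lt hmpos one_pos)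
    have hzp : z ^ p = 1 := by
      rw [hzdef, ← pow_mul, ← pow_succ, Nat.sub_add_cancel hmpos, hm]
    have hzcenter : z ∈ Subgroup.center G := pow_mem hbcenter _
    have hzN : z ∈ N := pow_mem b.2 _
    -- z as an element of Ω₁(Z(G))
    set zc : Subgroup.center G := ⟨z, hzcenter⟩ with hzc
    have hzcp : zc ^ p = 1 := by
      ext
      push_cast
      exact hzp
    set zz : Omega1 p (Subgroup.center G) := ⟨zc, hzcp⟩ with hzz
    have hzzne : zz ≠ 1 := by
      intro h
      apply hzne
      have := congrArg (fun x : Omega1 p (Subgroup.center G) => ((x : Subgroup.center G) : G)) h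
      exact this
    -- every χ i kills zc
    have hchi : ∀ i, χ i zc = 1 := by
      intro i
      have hρ : ρ i (zc : G) = 1 := hzN i
      have h2 : ((χ i zc : ℂ) • (LinearMap.id : V i →ₗ[ℂ] V i)) = 1 := by
        rw [← hcentral i zc, hρ]
      haveI := (hirr i).1
      obtain ⟨v, hv⟩ := exists_ne (0 : V i)
      have h3 : (χ i zc : ℂ) • v = v := by
        have := congrArg (fun f : V i →ₗ[ℂ] V i => f v) h2
        simpa using this
      have h4 : ((χ i zc : ℂ) - 1) • v = 0 := by
        rw [sub_smul, one_smul, h3, sub_self]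
      rcases smul_eq_zero.mp h4 with h5 | h5
      · ext
        exact sub_eq_zero.mp h5
      · exact absurd h5 hv
    -- the evaluation homomorphism at zz
    have hsep : ∀ φ : Omega1 p (Subgroup.center G) →* ℂˣ, φ zz = 1 := by
      intro φ
      have hle : Subgroup.closure
          (Set.range fun i : Fin k =>
            (χ i).comp (Omega1 p (Subgroup.center G)).subtype) ≤
          (MonoidHom.eval zz).ker := by
        rw [Subgroup.closure_le]
        rintro _ ⟨i, rfl⟩
        simp only [SetLike.mem_coe, MonoidHom.mem_ker]
        exact hchi i
      rw [hspan] at hle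
      exact hle (Subgroup.mem_top φ)
    -- But characters separate points
    haveI : Finite (Omega1 p (Subgroup.center G)) := Subtype.finite
    haveI : NeZero (Monoid.exponent (Omega1 p (Subgroup.center G))) :=
      ⟨Monoid.exponent_ne_zero_of_finite⟩
    obtain ⟨φ, hφ⟩ :=
      CommGroup.exists_apply_ne_one_of_hasEnoughRootsOfUnity
        (Omega1 p (Subgroup.center G)) ℂ hzzne
    exact hφ (hsep φ)
  -- conclude injectivity
  intro a b hab
  have h : ∀ i, ρ i a = ρ i b := fun i => congrFun hab i
  have hab1 : ∀ i, ρ i (a * b⁻¹) = 1 := by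
    intro i
    rw [map_mul, h i, ← map_mul, mul_inv_cancel, map_one]
  have := hker (a * b⁻¹) hab1
  exact mul_inv_eq_one.mp this
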